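/- arXiv:1507.05811 — 2 statements merged into one kernel-verified Lean document; each statement's English description precedes it below -/
import Mathlib

section
/- If Γ is a nonnegative integer with Γ ≤ n, then the extreme points of U(Γ) = {δ ∈ ℝ^n : ‖δ‖_∞ ≤ 1, ‖δ‖₁ ≤ Γ} are exactly the vectors with entries in {-1, 0, 1} having exactly Γ nonzero entries; in particular, for a linear function cᵀδ, the minimum over U(Γ) equals minus the sum of the Γ largest values of |c_i|. -/
open Finset

-- endpoint lemma
lemma endpoint_eq {a b x y d : ℝ} (ha : 0 < a) (hb : 0 < b) (hab : a + b = 1)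
    (hx : |x| ≤ 1) (hy : |y| ≤ 1) (h : a * x + b * y = d) (hd : |d| = 1) :
    x = d ∧ y = d := by
  rw [abs_le] at hx hy
  rcases abs_eq (by norm_num : (0:ℝ) ≤ 1) |>.mp hd with rfl | rfl
  · constructor <;> nlinarith
  · constructor <;> nlinarith

-- key combinatorial lemma
lemma key_bound {α : Type*} [DecidableEq α] :
    ∀ (Γ : ℕ) (s : Finset α) (a x : α → ℝ), Γ ≤ s.card →
      (∀ i ∈ s, 0 ≤ a i) → (∀ i ∈ s, 0 ≤ x i) → (∀ i ∈ s, x i ≤ 1) →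
      (∑ i ∈ s, x i ≤ (Γ : ℝ)) →
      ∃ S, S ⊆ s ∧ S.card = Γ ∧ ∑ i ∈ s, a i * x i ≤ ∑ i ∈ S, a i := by
  intro Γ
  induction Γ with
  | zero =>
    intro s a x _ _ hx0 _ hsum
    refine ⟨∅, empty_subset _, rfl, ?_⟩
    have h0 : ∑ i ∈ s, x i = 0 := le_antisymm (by simpa using hsum) (sum_nonneg hx0)
    have hz : ∀ i ∈ s, x i = 0 := (sum_eq_zero_iff_of_nonneg hx0).mp h0
    simp only [sum_empty]
    have : ∑ i ∈ s, a i * x i = ∑ i ∈ s, (0:ℝ) :=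
      sum_congr rfl fun i hi => by rw [hz i hi, mul_zero]
    simp [this]
  | succ Γ IH =>
    intro s a x hΓ ha hx0 hx1 hsum
    by_cases hle : ∑ i ∈ s, x i ≤ (Γ : ℝ)
    · obtain ⟨S, hSs, hScard, hb⟩ := IH s a x (le_trans (Nat.le_succ Γ) hΓ) ha hx0 hx1 hle
      obtain ⟨T, hST, hTs, hTcard⟩ := exists_subsuperset_card_eq hSs (by omega) hΓ
      exact ⟨T, hTs, hTcard, hb.trans (sum_le_sum_of_subset_of_nonneg hST
        (fun i hi _ => ha i (hTs hi)))⟩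
    · push_neg at hle
      have hsne : s.Nonempty := card_pos.mp (by omega)
      obtain ⟨i, his, hmax⟩ := exists_max_image s a hsne
      set t := s.erase i with ht
      have htcard : Γ ≤ t.card := by
        rw [ht, card_erase_of_mem his]; omega
      have hts : t ⊆ s := erase_subset i s
      have hMdef : ∑ k ∈ t, x k = ∑ k ∈ s, x k - x i := sum_erase_eq_sub his
      have hai : 0 ≤ a i := ha i his
      have hxi0 : 0 ≤ x i := hx0 i his
      have hxi1 : x i ≤ 1 := hx1 i his
      by_cases hMle : ∑ k ∈ t, x k ≤ (Γ : ℝ)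
      · obtain ⟨S, hSt, hScard, hb⟩ := IH t a x htcard (fun k hk => ha k (hts hk))
          (fun k hk => hx0 k (hts hk)) (fun k hk => hx1 k (hts hk)) hMle
        have hiS : i ∉ S := fun h => (mem_erase.mp (hSt h)).1 rfl
        refine ⟨insert i S, insert_subset his (hSt.trans hts), ?_, ?_⟩
        · rw [card_insert_of_notMem hiS, hScard]
        · rw [sum_insert hiS, ← Finset.add_sum_erase s _ his]
          have : a i * x i ≤ a i := by nlinarith
          linarith
      · push_neg at hMle
        set M := ∑ k ∈ t, x k with hM
        have hM0 : 0 < M := lt_of_le_of_lt (Nat.cast_nonneg Γ) hMle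
        set cst := (Γ : ℝ) / M with hc
        have hc0 : 0 ≤ cst := div_nonneg (Nat.cast_nonneg Γ) hM0.le
        have hc1 : cst ≤ 1 := (div_le_one hM0).mpr hMle.le
        set x' := fun k => cst * x k with hx'
        have hsum' : ∑ k ∈ t, x' k = (Γ : ℝ) := by
          rw [hx']; simp only []
          rw [← mul_sum, ← hM, hc, div_mul_cancel₀ _ hM0.ne']
        obtain ⟨S, hSt, hScard, hb⟩ := IH t a x' htcard (fun k hk => ha k (hts hk))
          (fun k hk => mul_nonneg hc0 (hx0 k (hts hk)))
          (fun k hk => by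
            have := hx1 k (hts hk); have := hx0 k (hts hk)
            calc cst * x k ≤ 1 * 1 := by nlinarith
              _ = 1 := by norm_num)
          (le_of_eq hsum')
        have hiS : i ∉ S := fun h => (mem_erase.mp (hSt h)).1 rfl
        refine ⟨insert i S, insert_subset his (hSt.trans hts), ?_, ?_⟩
        · rw [card_insert_of_notMem hiS, hScard]
        have htax : ∑ k ∈ t, a k * x k ≤ a i * M := by
          rw [hM, mul_sum]
          exact sum_le_sum fun k hk =>
            mul_le_mul_of_nonneg_right (hmax k (hts hk)) (hx0 k (hts hk))
        have hdiff : ∑ k ∈ t, a k * x k - ∑ k ∈ t, a k * x' k ≤ a i * (M - Γ) := by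
          have : ∑ k ∈ t, a k * x' k = cst * ∑ k ∈ t, a k * x k := by
            rw [mul_sum]; exact sum_congr rfl fun k _ => by rw [hx']; ring
          rw [this]
          have h1 : (1 - cst) * ∑ k ∈ t, a k * x k ≤ (1 - cst) * (a i * M) :=
            mul_le_mul_of_nonneg_left htax (by linarith)
          have h2 : (1 - cst) * (a i * M) = a i * (M - Γ) := by
            rw [hc]; field_simp
          nlinarith [h1, h2]
        have hMb : M - (Γ:ℝ) ≤ 1 - x i := by
          have h4 : ∑ k ∈ s, x k ≤ (Γ:ℝ) + 1 := by push_cast at hsum ⊢; linarith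
          linarith [hMdef]
        rw [sum_insert hiS, ← Finset.add_sum_erase s _ his, ← ht]
        have := hb
        nlinarith [mul_nonneg hai (sub_nonneg.mpr hxi1)]

lemma abs_sign_add (t ε : ℝ) (hε : 0 ≤ ε) :
    |t + ε * (if 0 ≤ t then 1 else -1)| = |t| + ε := by
  split_ifs with h
  · rw [abs_of_nonneg h, mul_one, abs_of_nonneg (by linarith)]
  · push_neg at h
    rw [abs_of_neg h, mul_neg_one, abs_of_neg (by linarith)]; ring

lemma abs_sign_sub (t ε : ℝ) (hε : 0 ≤ ε) (h : ε ≤ |t|) :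
    |t - ε * (if 0 ≤ t then 1 else -1)| = |t| - ε := by
  split_ifs with h'
  · rw [abs_of_nonneg h'] at h ⊢
    rw [mul_one, abs_of_nonneg (by linarith)]
  · push_neg at h'
    rw [abs_of_neg h'] at h ⊢
    rw [mul_neg_one, abs_of_nonpos (by linarith)]; ring

lemma sum_one_split {n : ℕ} (i : Fin n) (f : Fin n → ℝ) :
    ∑ k, f k = f i + ∑ k ∈ univ.erase i, f k :=
  (Finset.add_sum_erase _ f (mem_univ i)).symm

lemma sum_two_split {n : ℕ} (i j : Fin n) (hij : j ≠ i) (f : Fin n → ℝ) :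
    ∑ k, f k = f i + f j + ∑ k ∈ (univ.erase i).erase j, f k := by
  rw [sum_one_split i f, ← Finset.add_sum_erase (univ.erase i) f
    (mem_erase.mpr ⟨hij, mem_univ j⟩)]
  ring

lemma extreme_no_perturb {n : ℕ} {U : Set (Fin n → ℝ)} {δ : Fin n → ℝ}
    (hext : δ ∈ Set.extremePoints ℝ U) (v : Fin n → ℝ)
    (h1 : (fun k => δ k + v k) ∈ U) (h2 : (fun k => δ k - v k) ∈ U) : v = 0 := by
  have hseg : δ ∈ openSegment ℝ (fun k => δ k + v k) (fun k => δ k - v k) :=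
    ⟨1/2, 1/2, by norm_num, by norm_num, by norm_num, funext fun k => by
      simp only [Pi.add_apply, Pi.smul_apply, smul_eq_mul]; ring⟩
  obtain ⟨hmem, hP⟩ := mem_extremePoints.mp hext
  have h := hP (fun k => δ k + v k) h1 (fun k => δ k - v k) h2 hseg
  funext k
  have hk := congrFun h.1 k
  simp only [Pi.zero_apply]
  linarith

theorem budget_set_extreme_points (n : ℕ) (Γ : ℕ) (hΓ : Γ ≤ n) (c : Fin n → ℝ) :
    Set.extremePoints ℝ
        {δ : Fin n → ℝ | (∀ i, |δ i| ≤ 1) ∧ ∑ i, |δ i| ≤ (Γ : ℝ)} =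
      {δ : Fin n → ℝ | (∀ i, δ i = -1 ∨ δ i = 0 ∨ δ i = 1) ∧
        (Finset.univ.filter (fun i => δ i ≠ 0)).card = Γ} ∧
    IsLeast ((fun δ : Fin n → ℝ => ∑ i, c i * δ i) ''
        {δ : Fin n → ℝ | (∀ i, |δ i| ≤ 1) ∧ ∑ i, |δ i| ≤ (Γ : ℝ)})
      (-(Finset.univ.powersetCard Γ).sup'
        (Finset.powersetCard_nonempty.mpr (by simpa using hΓ))
        (fun S => ∑ i ∈ S, |c i|)) := by
  set U : Set (Fin n → ℝ) := {δ : Fin n → ℝ | (∀ i, |δ i| ≤ 1) ∧ ∑ i, |δ i| ≤ (Γ : ℝ)}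
    with hU
  -- generic fact: sum of |δ| for sign vectors
  have sum_abs_eq : ∀ δ : Fin n → ℝ, (∀ i, δ i = -1 ∨ δ i = 0 ∨ δ i = 1) →
      ∑ i, |δ i| = ((Finset.univ.filter (fun i => δ i ≠ 0)).card : ℝ) := by
    intro δ hval
    have : ∀ i : Fin n, |δ i| = if δ i ≠ 0 then (1:ℝ) else 0 := by
      intro i
      rcases hval i with h | h | h <;> simp [h]
    rw [Finset.sum_congr rfl (fun i _ => this i), Finset.sum_boole]
  constructor
  · -- extreme points characterization
    ext δ
    simp only [Set.mem_setOf_eq]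
    constructor
    · intro hext
      obtain ⟨hδ1, hδ2⟩ : (∀ i, |δ i| ≤ 1) ∧ ∑ i, |δ i| ≤ (Γ : ℝ) := hext.1
      -- Step 1: all entries in {-1,0,1}
      have hval : ∀ i, δ i = -1 ∨ δ i = 0 ∨ δ i = 1 := by
        by_contra hcon
        push_neg at hcon
        obtain ⟨i, hi1, hi0, hi2⟩ := hcon
        have habs0 : 0 < |δ i| := abs_pos.mpr hi0
        have habs1 : |δ i| < 1 := by
          rcases lt_or_eq_of_le (hδ1 i) with h | h
          · exact h
          · exact absurd ((abs_eq (by norm_num)).mp h) (by tauto)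
        by_cases hlt : ∑ k, |δ k| < (Γ : ℝ)
        · -- slack in the budget: perturb coordinate i alone
          set ε := min (1 - |δ i|) ((Γ : ℝ) - ∑ k, |δ k|) with hε
          have hε0 : 0 < ε := lt_min (by linarith) (by linarith)
          have hε1 : ε ≤ 1 - |δ i| := min_le_left _ _
          have hε2 : ε ≤ (Γ : ℝ) - ∑ k, |δ k| := min_le_right _ _
          set v : Fin n → ℝ := fun k => if k = i then ε else 0 with hv
          have hmem : ∀ (σ : ℝ), |σ| = 1 → (fun k => δ k + σ * v k) ∈ U := by
            intro σ hσ
            have hvk : ∀ k, |σ * v k| = if k = i then ε else 0 := by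
              intro k
              simp only [hv, abs_mul, hσ, one_mul]
              split_ifs <;> simp [abs_of_pos hε0]
            constructor
            · intro k
              refine (abs_add_le _ _).trans ?_
              rw [hvk]
              split_ifs with h
              · subst h; linarith
              · simpa using hδ1 k
            · calc ∑ k, |δ k + σ * v k| ≤ ∑ k, (|δ k| + if k = i then ε else 0) :=
                    Finset.sum_le_sum fun k _ => (abs_add_le _ _).trans (by rw [hvk])
                _ = ∑ k, |δ k| + ε := by
                    rw [Finset.sum_add_distrib, Finset.sum_ite_eq' Finset.univ i]
                    simp
                _ ≤ (Γ : ℝ) := by linarith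
          have h1 : (fun k => δ k + v k) ∈ U := by
            have := hmem 1 (by norm_num); simpa using this
          have h2 : (fun k => δ k - v k) ∈ U := by
            have := hmem (-1) (by norm_num)
            simpa [sub_eq_add_neg] using this
          have hv0 := extreme_no_perturb hext v h1 h2
          have hvi : v i = 0 := by rw [hv0]; rfl
          simp [hv] at hvi
          linarith
        · -- budget tight: find a second fractional coordinate
          have heq : ∑ k, |δ k| = (Γ : ℝ) := le_antisymm hδ2 (not_lt.mp hlt)
          have hfrac : ∃ j, j ≠ i ∧ 0 < |δ j| ∧ |δ j| < 1 := by
            by_contra hno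
            push_neg at hno
            have hall : ∀ j ∈ Finset.univ.erase i, |δ j| = if δ j ≠ 0 then (1:ℝ) else 0 := by
              intro j hj
              have hji : j ≠ i := (Finset.mem_erase.mp hj).1
              by_cases h0 : δ j = 0
              · simp [h0]
              · have := hno j hji (abs_pos.mpr h0)
                simp [h0, le_antisymm (hδ1 j) this]
            have hNval : ∑ k ∈ Finset.univ.erase i, |δ k| =
                ((Finset.univ.erase i).filter (fun j => δ j ≠ 0)).card := by
              rw [Finset.sum_congr rfl hall, Finset.sum_boole]
            set N := ((Finset.univ.erase i).filter (fun j => δ j ≠ 0)).card with hN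
            have hsplit := sum_one_split i (fun k => |δ k|)
            rw [heq, hNval] at hsplit
            have h1 : (N : ℝ) < (Γ : ℝ) := by linarith
            have h2 : (Γ : ℝ) < (N : ℝ) + 1 := by linarith
            have h1' : N < Γ := by exact_mod_cast h1
            have h2' : Γ < N + 1 := by exact_mod_cast h2
            omega
          obtain ⟨j, hji, hj0, hj1⟩ := hfrac
          set ε := min (min (1 - |δ i|) |δ i|) (min (1 - |δ j|) |δ j|) with hε
          have hε0 : 0 < ε := lt_min (lt_min (by linarith) habs0) (lt_min (by linarith) hj0)
          have hεi1 : ε ≤ 1 - |δ i| := le_trans (min_le_left _ _) (min_le_left _ _)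
          have hεi : ε ≤ |δ i| := le_trans (min_le_left _ _) (min_le_right _ _)
          have hεj1 : ε ≤ 1 - |δ j| := le_trans (min_le_right _ _) (min_le_left _ _)
          have hεj : ε ≤ |δ j| := le_trans (min_le_right _ _) (min_le_right _ _)
          set si : ℝ := if 0 ≤ δ i then 1 else -1 with hsi
          set sj : ℝ := if 0 ≤ δ j then 1 else -1 with hsj
          set v : Fin n → ℝ := fun k => if k = i then ε * si else if k = j then -(ε * sj) else 0
            with hv
          have hvi : v i = ε * si := by simp [hv]
          have hvj : v j = -(ε * sj) := by simp [hv, hji]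
          have hvo : ∀ k, k ≠ i → k ≠ j → v k = 0 := by
            intro k hki hkj; simp [hv, hki, hkj]
          have hip : |δ i + ε * si| = |δ i| + ε := by
            rw [hsi]; exact abs_sign_add (δ i) ε hε0.le
          have him : |δ i - ε * si| = |δ i| - ε := by
            rw [hsi]; exact abs_sign_sub (δ i) ε hε0.le hεi
          have hjp : |δ j + ε * sj| = |δ j| + ε := by
            rw [hsj]; exact abs_sign_add (δ j) ε hε0.le
          have hjm : |δ j - ε * sj| = |δ j| - ε := by
            rw [hsj]; exact abs_sign_sub (δ j) ε hε0.le hεj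
          have hδsplit := sum_two_split i j hji (fun k => |δ k|)
          have h1 : (fun k => δ k + v k) ∈ U := by
            constructor
            · intro k
              show |δ k + v k| ≤ 1
              by_cases hki : k = i
              · subst hki; rw [hvi, hip]; linarith
              · by_cases hkj : k = j
                · subst hkj; rw [hvj, ← sub_eq_add_neg, hjm]
                  linarith [abs_nonneg (δ k), hδ1 k]
                · rw [hvo k hki hkj, add_zero]; exact hδ1 k
            · show ∑ k, |δ k + v k| ≤ (Γ : ℝ)
              have hsp := sum_two_split i j hji (fun k => |δ k + v k|)
              rw [hsp, hvi, hvj, ← sub_eq_add_neg, hip, hjm]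
              have htail : ∑ k ∈ (Finset.univ.erase i).erase j, |δ k + v k| =
                  ∑ k ∈ (Finset.univ.erase i).erase j, |δ k| := by
                refine Finset.sum_congr rfl fun k hk => ?_
                have hkj : k ≠ j := (Finset.mem_erase.mp hk).1
                have hki : k ≠ i := (Finset.mem_erase.mp (Finset.mem_erase.mp hk).2).1
                rw [hvo k hki hkj, add_zero]
              rw [htail]
              have := hδsplit
              linarith [heq]
          have h2 : (fun k => δ k - v k) ∈ U := by
            constructor
            · intro k
              show |δ k - v k| ≤ 1
              by_cases hki : k = i
              · subst hki; rw [hvi, him]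
                linarith [abs_nonneg (δ k), hδ1 k]
              · by_cases hkj : k = j
                · subst hkj; rw [hvj, sub_neg_eq_add, hjp]; linarith
                · rw [hvo k hki hkj, sub_zero]; exact hδ1 k
            · show ∑ k, |δ k - v k| ≤ (Γ : ℝ)
              have hsp := sum_two_split i j hji (fun k => |δ k - v k|)
              rw [hsp, hvi, hvj, sub_neg_eq_add, him, hjp]
              have htail : ∑ k ∈ (Finset.univ.erase i).erase j, |δ k - v k| =
                  ∑ k ∈ (Finset.univ.erase i).erase j, |δ k| := by
                refine Finset.sum_congr rfl fun k hk => ?_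
                have hkj : k ≠ j := (Finset.mem_erase.mp hk).1
                have hki : k ≠ i := (Finset.mem_erase.mp (Finset.mem_erase.mp hk).2).1
                rw [hvo k hki hkj, sub_zero]
              rw [htail]
              have := hδsplit
              linarith [heq]
          have hv0 := extreme_no_perturb hext v h1 h2
          have hvi0 : v i = 0 := by rw [hv0]; rfl
          rw [hvi] at hvi0
          have : si = 1 ∨ si = -1 := by rw [hsi]; split_ifs <;> simp
          rcases this with h | h <;> rw [h] at hvi0 <;> simp at hvi0 <;> linarith
        -- end
      refine ⟨hval, ?_⟩
      -- Step 2: exactly Γ nonzeros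
      have hsum := sum_abs_eq δ hval
      set k := (Finset.univ.filter (fun i => δ i ≠ 0)).card with hk
      have hkΓ : k ≤ Γ := by
        have : (k : ℝ) ≤ (Γ : ℝ) := by rw [← hsum]; exact hδ2
        exact_mod_cast this
      by_contra hne
      have hklt : k < Γ := lt_of_le_of_ne hkΓ hne
      have hkn : k < n := lt_of_lt_of_le hklt hΓ
      obtain ⟨j, hj⟩ : ∃ j, δ j = 0 := by
        by_contra hall
        push_neg at hall
        have : Finset.univ.filter (fun i => δ i ≠ 0) = Finset.univ :=
          Finset.filter_true_of_mem fun i _ => hall i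
        rw [hk, this, Finset.card_univ, Fintype.card_fin] at hkn
        omega
      set v : Fin n → ℝ := fun m => if m = j then 1 else 0 with hv
      have hmem : ∀ (σ : ℝ), σ = 1 ∨ σ = -1 → (fun m => δ m + σ * v m) ∈ U := by
        intro σ hσ
        have hσ1 : |σ| = 1 := by rcases hσ with rfl | rfl <;> norm_num
        constructor
        · intro m
          rw [hv]
          by_cases h : m = j
          · subst h; simp [hj, abs_mul, hσ1]
          · simp [h, hδ1 m]
        · have : ∑ m, |δ m + σ * v m| = |δ j + σ * v j| +
              ∑ m ∈ Finset.univ.erase j, |δ m + σ * v m| :=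
            sum_one_split j _
          rw [this]
          have h1 : |δ j + σ * v j| = 1 := by
            rw [hv, hj]; simp [abs_mul, hσ1]
          have h2 : ∑ m ∈ Finset.univ.erase j, |δ m + σ * v m| =
              ∑ m ∈ Finset.univ.erase j, |δ m| := by
            refine Finset.sum_congr rfl fun m hm => ?_
            have : m ≠ j := (Finset.mem_erase.mp hm).1
            rw [hv]; simp [this]
          rw [h1, h2]
          have hsplit : ∑ m, |δ m| = |δ j| + ∑ m ∈ Finset.univ.erase j, |δ m| :=
            sum_one_split j _
          rw [hj, abs_zero] at hsplit
          have hc : (k : ℝ) + 1 ≤ (Γ : ℝ) := by exact_mod_cast hklt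
          linarith [hsum]
      have h1 : (fun m => δ m + v m) ∈ U := by
        have := hmem 1 (Or.inl rfl); simpa using this
      have h2 : (fun m => δ m - v m) ∈ U := by
        have := hmem (-1) (Or.inr rfl)
        simpa [sub_eq_add_neg] using this
      have := extreme_no_perturb hext v h1 h2
      have hvj : v j = 0 := by rw [this]; rfl
      rw [hv] at hvj
      simp at hvj
    · -- reverse inclusion
      rintro ⟨hval, hcard⟩
      have hsum : ∑ i, |δ i| = (Γ : ℝ) := by rw [sum_abs_eq δ hval, hcard]
      have habs : ∀ i, |δ i| ≤ 1 := by
        intro i; rcases hval i with h | h | h <;> simp [h]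
      refine ⟨⟨habs, le_of_eq hsum⟩, ?_⟩
      rintro x hx y hy ⟨a, b, ha, hb, hab, hxy⟩
      have hcoord : ∀ i, δ i ≠ 0 → x i = δ i ∧ y i = δ i := by
        intro i hi
        have hd : |δ i| = 1 := by rcases hval i with h | h | h <;> simp [h] at hi ⊢
        have heq : a * x i + b * y i = δ i := by
          have := congrFun hxy i
          simpa [Pi.add_apply, Pi.smul_apply, smul_eq_mul] using this
        exact endpoint_eq ha hb hab (hx.1 i) (hy.1 i) heq hd
      have hzero : ∀ z : Fin n → ℝ, z ∈ U → (∀ i, δ i ≠ 0 → z i = δ i) → z = δ := by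
        intro z hz hzeq
        have hS : ∑ i ∈ Finset.univ.filter (fun i => δ i ≠ 0), |z i| = (Γ : ℝ) := by
          have h1 : ∀ i ∈ Finset.univ.filter (fun i => δ i ≠ 0), |z i| = 1 := by
            intro i hi
            have hi' := (Finset.mem_filter.mp hi).2
            rw [hzeq i hi']
            rcases hval i with h | h | h <;> simp [h] at hi' ⊢
          rw [Finset.sum_congr rfl h1, Finset.sum_const, hcard]
          simp
        have hsplit := Finset.sum_filter_add_sum_filter_not Finset.univ
          (fun i => δ i ≠ 0) (fun i => |z i|)
        have hle : ∑ i ∈ Finset.univ.filter (fun i => ¬δ i ≠ 0), |z i| ≤ 0 := by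
          have h2 : ∑ i, |z i| ≤ (Γ:ℝ) := hz.2
          linarith [hsplit, hS]
        have hz0 : ∀ i ∈ Finset.univ.filter (fun i => ¬δ i ≠ 0), |z i| = 0 := by
          intro i hi
          have h0 : (0:ℝ) ≤ ∑ i ∈ Finset.univ.filter (fun i => ¬δ i ≠ 0), |z i| :=
            Finset.sum_nonneg fun i _ => abs_nonneg _
          have := (Finset.sum_eq_zero_iff_of_nonneg
            (fun i _ => abs_nonneg (z i))).mp (le_antisymm hle h0)
          exact this i hi
        funext i
        by_cases hi : δ i ≠ 0
        · exact hzeq i hi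
        · have : |z i| = 0 := hz0 i (Finset.mem_filter.mpr ⟨Finset.mem_univ i, hi⟩)
          rw [abs_eq_zero] at this
          rw [this]
          exact (not_not.mp hi).symm
      exact hzero x hx fun i hi => (hcoord i hi).1
  · -- IsLeast
    set NE : (Finset.univ.powersetCard Γ : Finset (Finset (Fin n))).Nonempty :=
      Finset.powersetCard_nonempty.mpr (by simpa using hΓ) with hNE
    constructor
    · obtain ⟨S, hS, hsup⟩ := Finset.exists_mem_eq_sup' NE (fun S => ∑ i ∈ S, |c i|)
      have hScard : S.card = Γ := (Finset.mem_powersetCard.mp hS).2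
      refine ⟨fun i => if i ∈ S then (if 0 ≤ c i then -1 else 1) else 0, ⟨?_, ?_⟩, ?_⟩
      · intro i
        show |if i ∈ S then (if 0 ≤ c i then (-1:ℝ) else 1) else 0| ≤ 1
        split_ifs <;> norm_num
      · show ∑ i, |if i ∈ S then (if 0 ≤ c i then (-1:ℝ) else 1) else 0| ≤ (Γ : ℝ)
        have : ∀ i : Fin n, |if i ∈ S then (if 0 ≤ c i then (-1:ℝ) else 1) else 0| =
            if i ∈ S then 1 else 0 := by
          intro i; split_ifs <;> norm_num
        rw [Finset.sum_congr rfl (fun i _ => this i), Finset.sum_ite_mem,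
          Finset.univ_inter, Finset.sum_const, hScard]
        simp
      · show ∑ i, c i * (if i ∈ S then (if 0 ≤ c i then (-1:ℝ) else 1) else 0) =
            -(Finset.univ.powersetCard Γ).sup' NE (fun S => ∑ i ∈ S, |c i|)
        have : ∀ i : Fin n, c i * (if i ∈ S then (if 0 ≤ c i then (-1:ℝ) else 1) else 0) =
            if i ∈ S then -|c i| else 0 := by
          intro i
          split_ifs with h1 h2
          · rw [abs_of_nonneg h2]; ring
          · push_neg at h2; rw [abs_of_neg h2]; ring
          · ring
        rw [Finset.sum_congr rfl (fun i _ => this i), Finset.sum_ite_mem,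
          Finset.univ_inter, Finset.sum_neg_distrib, hsup]
    · rintro r ⟨δ, hδ, rfl⟩
      obtain ⟨hδ1, hδ2⟩ := hδ
      obtain ⟨S, hSu, hScard, hbound⟩ := key_bound Γ Finset.univ
        (fun i => |c i|) (fun i => |δ i|)
        (by simpa using hΓ) (fun i _ => abs_nonneg _) (fun i _ => abs_nonneg _)
        (fun i _ => hδ1 i) hδ2
      have hSmem : S ∈ Finset.univ.powersetCard Γ :=
        Finset.mem_powersetCard.mpr ⟨hSu, hScard⟩
      have hsup : ∑ i ∈ S, |c i| ≤ (Finset.univ.powersetCard Γ).sup' NE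
          (fun S => ∑ i ∈ S, |c i|) := Finset.le_sup' (fun S => ∑ i ∈ S, |c i|) hSmem
      have hlow : -∑ i, |c i| * |δ i| ≤ ∑ i, c i * δ i := by
        rw [← Finset.sum_neg_distrib]

        refine Finset.sum_le_sum fun i _ => ?_
        rw [← abs_mul]
        exact neg_abs_le _
      simp only []
      linarith
end

section
/- Let U = {δ ∈ ℝ^n : Lδ ≥ l} be a nonempty bounded polyhedron and a ∈ ℝ^n, b ∈ ℝ. The robust constraint 'aᵀδ ≥ b for all δ ∈ U' holds if and only if there exists λ ≥ 0 in ℝ^ℓ with Lᵀλ = a and λᵀl ≥ b. -/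
lemma conic_caratheodory {E : Type*} [AddCommGroup E] [Module ℝ E]
    {ι : Type*} [Fintype ι] [DecidableEq ι] (v : ι → E) :
    ∀ (s : Finset ι) (c : ι → ℝ), 0 ≤ c → (∀ i ∉ s, c i = 0) →
      ∃ t : Finset ι, t ⊆ s ∧ LinearIndependent ℝ (fun i : t => v i) ∧
        ∃ c' : ι → ℝ, 0 ≤ c' ∧ (∀ i ∉ t, c' i = 0) ∧
          ∑ i, c' i • v i = ∑ i, c i • v i := by
  intro s
  induction s using Finset.strongInduction with
  | _ s ih =>
    intro c hc hsupp
    by_cases hli : LinearIndependent ℝ (fun i : s => v i)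
    · exact ⟨s, subset_rfl, hli, c, hc, hsupp, rfl⟩
    obtain ⟨g, hg0, j, hj⟩ := Fintype.not_linearIndependent_iff.mp hli
    set d : ι → ℝ := fun i => if h : i ∈ s then g ⟨i, h⟩ else 0 with hd
    have hdsupp : ∀ i ∉ s, d i = 0 := fun i hi => by simp [hd, hi]
    have hdsum : ∑ i, d i • v i = 0 := by
      rw [← Finset.sum_subset (Finset.subset_univ s) (fun i _ hi => by simp [hdsupp i hi])]
      rw [← hg0, ← Finset.sum_attach s (fun i => d i • v i)]
      refine Finset.sum_congr rfl fun i _ => ?_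
      simp [hd, i.2]
    have key : ∀ d : ι → ℝ, (∀ i ∉ s, d i = 0) → (∑ i, d i • v i = 0) →
        (∃ i, 0 < d i) →
        ∃ t : Finset ι, t ⊆ s ∧ LinearIndependent ℝ (fun i : t => v i) ∧
          ∃ c' : ι → ℝ, 0 ≤ c' ∧ (∀ i ∉ t, c' i = 0) ∧
            ∑ i, c' i • v i = ∑ i, c i • v i := by
      intro d hdsupp hdsum ⟨i₁, hi₁⟩
      have hi₁s : i₁ ∈ s := by
        by_contra h; rw [hdsupp i₁ h] at hi₁; exact lt_irrefl 0 hi₁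
      have hPne : (s.filter (fun i => 0 < d i)).Nonempty :=
        ⟨i₁, Finset.mem_filter.mpr ⟨hi₁s, hi₁⟩⟩
      obtain ⟨i₀, hi₀P, hi₀min⟩ :=
        Finset.exists_min_image _ (fun i => c i / d i) hPne
      obtain ⟨hi₀s, hi₀d⟩ := Finset.mem_filter.mp hi₀P
      set τ : ℝ := c i₀ / d i₀ with hτ
      have hτ0 : 0 ≤ τ := div_nonneg (hc i₀) hi₀d.le
      set c' : ι → ℝ := fun i => c i - τ * d i with hc'
      have hc'0 : 0 ≤ c' := by
        intro i
        by_cases h : 0 < d i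
        · by_cases hs : i ∈ s
          · have := hi₀min i (Finset.mem_filter.mpr ⟨hs, h⟩)
            have := (le_div_iff₀ h).mp this
            simpa [hc'] using this
          · simp [hc', hdsupp i hs, hsupp i hs]
        · have h1 : τ * d i ≤ 0 := mul_nonpos_of_nonneg_of_nonpos hτ0 (not_lt.mp h)
          have h2 : (0:ℝ) ≤ c i := hc i
          simp only [hc', Pi.zero_apply]
          linarith
      have hc'i₀ : c' i₀ = 0 := by
        simp [hc', hτ, div_mul_cancel₀ _ (ne_of_gt hi₀d)]
      have hc'supp : ∀ i ∉ s.erase i₀, c' i = 0 := by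
        intro i hi
        by_cases h : i ∈ s
        · have heq : i = i₀ := by
            by_contra hne
            exact hi (Finset.mem_erase.mpr ⟨hne, h⟩)
          rw [heq]; exact hc'i₀
        · simp [hc', hsupp i h, hdsupp i h]
      have hc'sum : ∑ i, c' i • v i = ∑ i, c i • v i := by
        simp only [hc', sub_smul, Finset.sum_sub_distrib, mul_smul]
        rw [← Finset.smul_sum, hdsum, smul_zero, sub_zero]
      obtain ⟨t, hts, hli', c'', h1, h2, h3⟩ :=
        ih (s.erase i₀) (Finset.erase_ssubset hi₀s) c' hc'0 hc'supp
      exact ⟨t, hts.trans (Finset.erase_subset _ _), hli', c'', h1, h2, h3.trans hc'sum⟩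
    by_cases hpos : ∃ i, 0 < d i
    · exact key d hdsupp hdsum hpos
    · push_neg at hpos
      refine key (-d) (fun i hi => by simp [hdsupp i hi])
        (by simp [neg_smul, Finset.sum_neg_distrib, hdsum]) ?_
      have hdj : d (j : ι) ≠ 0 := by simpa [hd, j.2] using hj
      exact ⟨(j : ι), by simpa using (hpos (j : ι)).lt_of_ne hdj⟩

lemma piece_closed {E : Type*} [NormedAddCommGroup E] [NormedSpace ℝ E]
    [FiniteDimensional ℝ E] {ι : Type*} [Fintype ι] (v : ι → E)
    (hv : LinearIndependent ℝ v) :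
    IsClosed ((fun c : ι → ℝ => ∑ i, c i • v i) '' {c | 0 ≤ c}) := by
  have hker : LinearMap.ker (Fintype.linearCombination ℝ v) = ⊥ := by
    rw [LinearMap.ker_eq_bot']
    intro c hc
    exact funext (Fintype.linearIndependent_iff.mp hv c
      (by simpa [Fintype.linearCombination_apply] using hc))
  have hemb := LinearMap.isClosedEmbedding_of_injective (𝕜 := ℝ) hker
  have hcl : IsClosed {c : ι → ℝ | 0 ≤ c} := by
    have h : {c : ι → ℝ | 0 ≤ c} = ⋂ i, {c | 0 ≤ c i} := by
      ext c; simp [Pi.le_def]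
    rw [h]
    exact isClosed_iInter fun i => isClosed_le continuous_const (continuous_apply i)
  have himg : (fun c : ι → ℝ => ∑ i, c i • v i) = ⇑(Fintype.linearCombination ℝ v) := by
    ext c; simp [Fintype.linearCombination_apply]
  rw [himg]
  exact hemb.isClosedMap _ hcl

lemma conic_caratheodory' {E : Type*} [AddCommGroup E] [Module ℝ E]
    {ι : Type*} [Fintype ι] [DecidableEq ι] (v : ι → E)
    (c : ι → ℝ) (hc : 0 ≤ c) :
      ∃ t : Finset ι, LinearIndependent ℝ (fun i : t => v i) ∧
        ∃ c' : ι → ℝ, 0 ≤ c' ∧ (∀ i ∉ t, c' i = 0) ∧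
          ∑ i, c' i • v i = ∑ i, c i • v i := by
  obtain ⟨t, -, h⟩ := conic_caratheodory v Finset.univ c hc (by simp)
  exact ⟨t, h⟩

lemma isClosed_coneSet {E : Type*} [NormedAddCommGroup E] [NormedSpace ℝ E]
    [FiniteDimensional ℝ E] {ι : Type*} [Fintype ι] [DecidableEq ι] (v : ι → E) :
    IsClosed {x : E | ∃ c : ι → ℝ, 0 ≤ c ∧ x = ∑ i, c i • v i} := by
  have hset : {x : E | ∃ c : ι → ℝ, 0 ≤ c ∧ x = ∑ i, c i • v i} =
      ⋃ t ∈ {t : Finset ι | LinearIndependent ℝ (fun i : t => v i)},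
        ((fun c : t → ℝ => ∑ i, c i • v (i : ι)) '' {c | 0 ≤ c}) := by
    ext x
    simp only [Set.mem_setOf_eq, Set.mem_iUnion, Set.mem_image, exists_prop]
    constructor
    · rintro ⟨c, hc, rfl⟩
      obtain ⟨t, hli, c', hc'0, hsupp, hsum⟩ := conic_caratheodory' v c hc
      refine ⟨t, hli, fun i => c' i, fun i => hc'0 _, ?_⟩
      rw [← hsum, ← Finset.sum_subset (Finset.subset_univ t)
        (fun i _ hi => by simp [hsupp i hi]),
        ← Finset.sum_attach t (fun i => c' i • v i), Finset.univ_eq_attach]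
    · rintro ⟨t, hli, c, hc, rfl⟩
      classical
      refine ⟨fun i => if h : i ∈ t then c ⟨i, h⟩ else 0, fun i => ?_, ?_⟩
      · dsimp only; split
        · exact hc _
        · exact le_refl 0
      · rw [← Finset.sum_subset (Finset.subset_univ t)
          (fun i _ hi => by simp [hi]),
          ← Finset.sum_attach t (fun i => (if h : i ∈ t then c ⟨i, h⟩ else 0) • v i)]
        refine Finset.sum_congr rfl fun i _ => ?_
        simp [i.2]
  rw [hset]
  exact Set.Finite.isClosed_biUnion (Set.toFinite _) (fun t ht => piece_closed _ ht)

open Matrix in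
theorem robust_constraint_duality (n ℓ : ℕ)
    (L : Matrix (Fin ℓ) (Fin n) ℝ) (l : Fin ℓ → ℝ)
    (a : Fin n → ℝ) (b : ℝ)
    (hne : {δ : Fin n → ℝ | l ≤ L.mulVec δ}.Nonempty)
    (hbdd : Bornology.IsBounded {δ : Fin n → ℝ | l ≤ L.mulVec δ}) :
    (∀ δ : Fin n → ℝ, l ≤ L.mulVec δ → b ≤ a ⬝ᵥ δ) ↔
      ∃ lam : Fin ℓ → ℝ, 0 ≤ lam ∧ Lᵀ.mulVec lam = a ∧ b ≤ lam ⬝ᵥ l := by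
  classical
  constructor
  · intro H
    by_contra hno
    -- the generating vectors of the dual cone
    set v : (Fin ℓ ⊕ Unit) → (Fin n → ℝ) × ℝ := fun i =>
      Sum.elim (fun i => ((fun j => L i j), l i)) (fun _ => (0, -1)) i with hv
    set C : Set ((Fin n → ℝ) × ℝ) :=
      {x : (Fin n → ℝ) × ℝ | ∃ c : (Fin ℓ ⊕ Unit) → ℝ, 0 ≤ c ∧ x = ∑ i, c i • v i}
      with hC
    -- membership in C gives the desired multiplier
    have hmem : ((a, b) : (Fin n → ℝ) × ℝ) ∉ C := by
      rintro ⟨c, hc, hab⟩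
      rw [Fintype.sum_sum_type] at hab
      simp only [hv, Sum.elim_inl, Sum.elim_inr, Finset.univ_unique, Finset.sum_const,
        one_smul, Finset.sum_singleton] at hab
      have hfst := congrArg Prod.fst hab
      have hsnd := congrArg Prod.snd hab
      simp only [Prod.fst_add, Prod.fst_sum, Prod.smul_fst, smul_zero, add_zero,
        Prod.snd_add, Prod.snd_sum, Prod.smul_snd, smul_eq_mul, mul_neg, mul_one] at hfst hsnd
      refine hno ⟨fun i => c (Sum.inl i), fun i => hc _, ?_, ?_⟩
      · funext j
        rw [hfst]
        simp [Matrix.mulVec, dotProduct, Matrix.transpose_apply, Finset.sum_apply,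
          mul_comm]
      · have hcr : 0 ≤ c (Sum.inr ()) := hc _
        simp only [dotProduct]
        rw [hsnd]
        linarith
    -- C is closed and convex
    have hclosed : IsClosed C := isClosed_coneSet v
    have hconvex : Convex ℝ C := by
      rintro x ⟨cx, hcx, rfl⟩ y ⟨cy, hcy, rfl⟩ α β hα hβ hαβ
      refine ⟨fun i => α * cx i + β * cy i,
        fun i => add_nonneg (mul_nonneg hα (hcx i)) (mul_nonneg hβ (hcy i)), ?_⟩
      rw [Finset.smul_sum, Finset.smul_sum, ← Finset.sum_add_distrib]
      refine Finset.sum_congr rfl fun i _ => ?_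
      simp only [add_smul, mul_smul]
    -- separate (a, b) from C
    obtain ⟨f, u, hsep, hu⟩ := geometric_hahn_banach_closed_point hconvex hclosed hmem
    have h0C : (0 : (Fin n → ℝ) × ℝ) ∈ C := ⟨0, le_refl _, by simp⟩
    have hu0 : 0 < u := by have := hsep 0 h0C; simpa using this
    -- on the cone, f is nonpositive
    have hconic : ∀ y ∈ C, f y ≤ 0 := by
      rintro y ⟨c, hc, rfl⟩
      by_contra hf
      push_neg at hf
      set y := ∑ i, c i • v i
      set T := (u + 1) / f y with hT
      have hT0 : 0 ≤ T := div_nonneg (by linarith) hf.le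
      have hTy : T • y ∈ C := by
        refine ⟨fun i => T * c i, fun i => mul_nonneg hT0 (hc i), ?_⟩
        rw [Finset.smul_sum]
        exact Finset.sum_congr rfl fun i _ => (smul_smul T (c i) (v i))
      have := hsep _ hTy
      rw [f.map_smul, smul_eq_mul, hT, div_mul_cancel₀ _ (ne_of_gt hf)] at this
      linarith
    have hgen : ∀ i, f (v i) ≤ 0 := by
      intro i
      refine hconic (v i) ⟨fun k => if k = i then 1 else 0,
        fun k => by dsimp only; split <;> norm_num, ?_⟩
      simp [ite_smul]
    -- decompose f
    set d : Fin n → ℝ := fun j => f ((Pi.single j 1 : Fin n → ℝ), (0 : ℝ)) with hd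
    set s : ℝ := f ((0 : Fin n → ℝ), (1 : ℝ)) with hs
    have hsplit : ∀ (x : Fin n → ℝ) (r : ℝ), f (x, r) = x ⬝ᵥ d + r * s := by
      intro x r
      have hx : ((x, r) : (Fin n → ℝ) × ℝ)
          = (∑ j, x j • (((Pi.single j 1 : Fin n → ℝ), (0 : ℝ)) : (Fin n → ℝ) × ℝ))
          + r • (((0 : Fin n → ℝ), (1 : ℝ)) : (Fin n → ℝ) × ℝ) := by
        refine Prod.ext ?_ ?_
        · simp only [Prod.fst_add, Prod.fst_sum, Prod.smul_fst, Prod.snd_add, smul_zero,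
            add_zero]
          first
          | rfl
          | (funext j'
             simp [Finset.sum_apply, Pi.single_apply, mul_comm])
        · simp [Prod.snd_add, Prod.snd_sum]
      rw [hx, map_add, map_sum, f.map_smul, smul_eq_mul]
      have h1 : ∀ j, f (x j • (((Pi.single j 1 : Fin n → ℝ), (0 : ℝ)) : (Fin n → ℝ) × ℝ)) = x j * d j :=
        fun j => by rw [f.map_smul, smul_eq_mul]
      simp only [dotProduct]
      exact congrArg₂ (· + ·) (Finset.sum_congr rfl fun j _ => h1 j) rfl
    have hsnn : 0 ≤ s := by
      have := hgen (Sum.inr ())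
      rw [hv] at this
      simp only [Sum.elim_inr] at this
      have h' := hsplit 0 (-1)
      simp only [zero_dotProduct, zero_add, neg_one_mul] at h'
      linarith [h' ▸ this]
    have hLi : ∀ i, L.mulVec d i + l i * s ≤ 0 := by
      intro i
      have := hgen (Sum.inl i)
      rw [hv] at this
      simp only [Sum.elim_inl] at this
      rw [hsplit] at this
      exact this
    have hab : 0 < a ⬝ᵥ d + b * s := by
      have := hu
      rw [hsplit] at this
      linarith
    rcases eq_or_lt_of_le hsnn with hs0 | hspos
    · -- s = 0 : contradiction with boundedness
      have had : 0 < a ⬝ᵥ d := by rw [← hs0] at hab; simpa using hab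
      have hd0 : d ≠ 0 := by
        intro h0
        rw [h0] at had
        simp [dotProduct] at had
      have hLd : ∀ i, L.mulVec d i ≤ 0 := by
        intro i; have := hLi i; rw [← hs0] at this; simpa using this
      obtain ⟨δ₀, hδ₀⟩ := hne
      obtain ⟨R, hR⟩ := isBounded_iff_forall_norm_le.mp hbdd
      have hdpos : 0 < ‖d‖ := norm_pos_iff.mpr hd0
      set t := (R + ‖δ₀‖ + 1) / ‖d‖ with ht
      have hRδ : ‖δ₀‖ ≤ R := hR δ₀ hδ₀
      have ht0 : 0 ≤ t := div_nonneg (by linarith [norm_nonneg δ₀]) hdpos.le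
      have hmemU : δ₀ - t • d ∈ {δ : Fin n → ℝ | l ≤ L.mulVec δ} := by
        intro i
        have h1 : l i ≤ L.mulVec δ₀ i := hδ₀ i
        have h2 : L.mulVec (δ₀ - t • d) i = L.mulVec δ₀ i - t * L.mulVec d i := by
          rw [Matrix.mulVec_sub, Matrix.mulVec_smul]
          simp
        rw [h2]
        nlinarith [hLd i]
      have := hR _ hmemU
      have hnorm : t * ‖d‖ - ‖δ₀‖ ≤ ‖δ₀ - t • d‖ := by
        calc t * ‖d‖ - ‖δ₀‖ = ‖t • d‖ - ‖δ₀‖ := by rw [norm_smul]; simp [abs_of_nonneg ht0]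
        _ ≤ ‖t • d - δ₀‖ := norm_sub_norm_le _ _
        _ = ‖δ₀ - t • d‖ := norm_sub_rev _ _
      rw [ht] at hnorm
      rw [div_mul_cancel₀ _ (ne_of_gt hdpos)] at hnorm
      linarith
    · -- s > 0 : build a feasible point violating the constraint
      set δ := (-(s⁻¹)) • d with hδ
      have hmemU : δ ∈ {δ : Fin n → ℝ | l ≤ L.mulVec δ} := by
        intro i
        have h1 := hLi i
        have h2 : L.mulVec δ i = (-(s⁻¹)) * L.mulVec d i := by
          rw [hδ, Matrix.mulVec_smul]; simp
        rw [h2]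
        have h3 : 0 < s⁻¹ := inv_pos.mpr hspos
        have h5 : s⁻¹ * (L.mulVec d i + l i * s) ≤ 0 :=
          mul_nonpos_of_nonneg_of_nonpos h3.le h1
        have h6 : s⁻¹ * (l i * s) = l i := by field_simp
        nlinarith [h5, h6]
      have hHδ := H δ hmemU
      have h4 : a ⬝ᵥ δ = (-(s⁻¹)) * (a ⬝ᵥ d) := by
        rw [hδ]
        simp only [dotProduct, Pi.smul_apply, smul_eq_mul, Finset.mul_sum]
        exact Finset.sum_congr rfl fun j _ => by ring
      have h3 : 0 < s⁻¹ := inv_pos.mpr hspos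
      have h5 : s⁻¹ * (a ⬝ᵥ d + b * s) = s⁻¹ * (a ⬝ᵥ d) + b := by
        field_simp
      linarith [mul_pos h3 hab, h5, hHδ, h4]
  · rintro ⟨lam, hlam0, hLa, hbl⟩ δ hδ
    have h1 : a ⬝ᵥ δ = lam ⬝ᵥ L.mulVec δ := by
      rw [← hLa, Matrix.mulVec_transpose, ← Matrix.dotProduct_mulVec]
    have h2 : lam ⬝ᵥ l ≤ lam ⬝ᵥ L.mulVec δ := by
      refine Finset.sum_le_sum fun i _ => ?_
      exact mul_le_mul_of_nonneg_left (hδ i) (hlam0 i)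
    linarith
end
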